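/- Let G be a graph and X ⊆ V(G) be a (3k, α)-linked set for some α ∈ [2/3, 1). Then the set T_X = {(A,B) ∈ S_{k+1}(G) : |X ∩ B| > α|X|} is a tangle of order k+1 in G. -/

import Mathlib

open SimpleGraph Set

universe u

/-- A branch-decomposition of a graph `G`: a ternary tree `T` (internal vertices of
degree 3) together with a bijection from the edges of `G` to the leaves of `T`. -/
structure BranchDecomp {V : Type u} (G : SimpleGraph V) : Type (u + 1) where
  t : Type
  fin : Fintype t
  T : SimpleGraph t
  isTree : T.IsTree
  ternary : ∀ v : t, (T.neighborSet v).ncard ≤ 1 ∨ (T.neighborSet v).ncard = 3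
  τ : G.edgeSet ≃ {v : t // (T.neighborSet v).ncard ≤ 1}

namespace BranchDecomp

variable {V : Type u} {G : SimpleGraph V} (B : BranchDecomp G)

/-- The edges of `G` whose leaves lie on the `a`-side of the tree edge `ab`. -/
def side (a b : B.t) : Set G.edgeSet :=
  {e | (B.T.deleteEdges {s(a, b)}).Reachable a (B.τ e).1}

/-- The boundary `∂(X_e)` of the bipartition of `E(G)` induced by the tree edge `ab`:
vertices incident to edges on both sides. -/
def bdry (a b : B.t) : Set V :=
  {v | (∃ e : G.edgeSet, e ∈ B.side a b ∧ v ∈ (e : Sym2 V)) ∧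
       (∃ e : G.edgeSet, e ∉ B.side a b ∧ v ∈ (e : Sym2 V))}

/-- The width of a branch-decomposition: the maximum, over edges of the tree, of the
size of the corresponding boundary. -/
noncomputable def width : ℕ :=
  sSup {n | ∃ a b : B.t, B.T.Adj a b ∧ n = (B.bdry a b).ncard}

end BranchDecomp

/-- The branchwidth of a graph: the minimum width of a branch-decomposition. -/
noncomputable def branchwidth {V : Type u} (G : SimpleGraph V) : ℕ :=
  sInf {n | ∃ B : BranchDecomp G, B.width = n}

/-- A tree-decomposition of a graph. -/
structure TreeDecomp {V : Type u} (G : SimpleGraph V) : Type (u + 1) where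
  t : Type
  fin : Fintype t
  T : SimpleGraph t
  isTree : T.IsTree
  β : t → Set V
  covers_edge : ∀ ⦃u v : V⦄, G.Adj u v → ∃ x, u ∈ β x ∧ v ∈ β x
  covers_vert : ∀ v : V, ∃ x, v ∈ β x
  subtree : ∀ v : V, (T.induce {x | v ∈ β x}).Connected

/-- The width of a tree-decomposition: maximum bag size minus one. -/
noncomputable def TreeDecomp.width {V : Type u} {G : SimpleGraph V} (D : TreeDecomp G) : ℕ :=
  sSup {n | ∃ x : D.t, n + 1 = (D.β x).ncard}

/-- The treewidth of a graph. -/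
noncomputable def treewidth {V : Type u} (G : SimpleGraph V) : ℕ :=
  sInf {n | ∃ D : TreeDecomp G, D.width = n}

/-- A minor model of `H` in `G`: disjoint connected branch sets with edges realized. -/
def IsMinorModel {V : Type u} {W : Type*} (G : SimpleGraph V) (H : SimpleGraph W)
    (φ : W → Set V) : Prop :=
  (∀ w, (G.induce (φ w)).Connected) ∧
  (Pairwise fun w₁ w₂ => Disjoint (φ w₁) (φ w₂)) ∧
  (∀ ⦃w₁ w₂ : W⦄, H.Adj w₁ w₂ → ∃ a ∈ φ w₁, ∃ b ∈ φ w₂, G.Adj a b)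

/-- `G` has `H` as a minor. -/
def HasMinor {V : Type u} {W : Type*} (G : SimpleGraph V) (H : SimpleGraph W) : Prop :=
  ∃ φ : W → Set V, IsMinorModel G H φ

/-- The `(k × k)`-grid. -/
def gridGraph (k : ℕ) : SimpleGraph (Fin k × Fin k) :=
  SimpleGraph.fromRel fun p q =>
    (p.1 = q.1 ∧ (p.2 : ℕ) + 1 = (q.2 : ℕ)) ∨ (p.2 = q.2 ∧ (p.1 : ℕ) + 1 = (q.1 : ℕ))

/-- A separation of `G`: a pair of vertex sets covering `V(G)` with no edge between the
two "private" parts. -/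
def IsSeparation {V : Type u} (G : SimpleGraph V) (A B : Set V) : Prop :=
  A ∪ B = Set.univ ∧ ∀ a ∈ A \ B, ∀ b ∈ B \ A, ¬ G.Adj a b

/-- The order of a separation `(A, B)`. -/
noncomputable def sepOrder {V : Type u} (A B : Set V) : ℕ := (A ∩ B).ncard

/-- Three sets of vertices cover `G` (as induced subgraphs `G[A₁] ∪ G[A₂] ∪ G[A₃] = G`). -/
def TripleCovers {V : Type u} (G : SimpleGraph V) (A₁ A₂ A₃ : Set V) : Prop :=
  A₁ ∪ A₂ ∪ A₃ = Set.univ ∧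
  ∀ ⦃x y : V⦄, G.Adj x y →
    ({x, y} : Set V) ⊆ A₁ ∨ ({x, y} : Set V) ⊆ A₂ ∨ ({x, y} : Set V) ⊆ A₃

/-- A tangle of order `k` in `G`: an orientation of all separations of order `< k`
(containing exactly one of `(A,B)` and `(B,A)` for each) such that no three small sides
cover `G`. -/
def IsTangle {V : Type u} (G : SimpleGraph V) (k : ℕ) (𝒯 : Set (Set V × Set V)) : Prop :=
  (∀ p ∈ 𝒯, IsSeparation G p.1 p.2 ∧ sepOrder p.1 p.2 < k) ∧
  (∀ A B : Set V, IsSeparation G A B → sepOrder A B < k →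
      ((A, B) ∈ 𝒯 ↔ (B, A) ∉ 𝒯)) ∧
  (∀ p₁ ∈ 𝒯, ∀ p₂ ∈ 𝒯, ∀ p₃ ∈ 𝒯,
      ¬ TripleCovers G (Prod.fst p₁) (Prod.fst p₂) (Prod.fst p₃))

/-- `S` is an `α`-balanced separator for `X` in `G`: every component of `G - S` contains
at most `α|X|` vertices of `X`. -/
def IsBalancedSeparator {V : Type u} (G : SimpleGraph V) (α : ℝ) (X S : Set V) : Prop :=
  ∀ C : (G.induce Sᶜ).ConnectedComponent,
    (((Subtype.val '' C.supp) ∩ X).ncard : ℝ) ≤ α * X.ncard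

/-- `X` is `(k, α)`-linked in `G`: there is no `α`-balanced separator for `X` of size at
most `k`. -/
def IsLinked {V : Type u} (G : SimpleGraph V) (k : ℕ) (α : ℝ) (X : Set V) : Prop :=
  ¬ ∃ S : Set V, S.ncard ≤ k ∧ IsBalancedSeparator G α X S

lemma walk_stay {V : Type u} (G : SimpleGraph V) (S P Q : Set V)
    (hcov : Sᶜ ⊆ P ∪ Q) (hPQ : ∀ a ∈ P, ∀ b ∈ Q, ¬ G.Adj a b)
    {u v : ↥Sᶜ} (w : (G.induce Sᶜ).Walk u v) : (u : V) ∈ P → (v : V) ∈ P := by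
  induction w with
  | nil => exact id
  | @cons a b c h p ih =>
    intro hu
    apply ih
    have hadj : G.Adj (a : V) (b : V) := h
    rcases hcov b.2 with hb | hb
    · exact hb
    · exact absurd hadj (hPQ _ hu _ hb)

lemma comp_side {V : Type u} (G : SimpleGraph V) (S P Q : Set V)
    (hcov : Sᶜ ⊆ P ∪ Q) (hPQ : ∀ a ∈ P, ∀ b ∈ Q, ¬ G.Adj a b)
    (C : (G.induce Sᶜ).ConnectedComponent) :
    (Subtype.val '' C.supp) ⊆ P ∨ (Subtype.val '' C.supp) ⊆ Q := by
  obtain ⟨v, hv⟩ := C.exists_rep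
  have hmem : ∀ u : ↥Sᶜ, u ∈ C.supp → (G.induce Sᶜ).Reachable v u := by
    intro u hu
    rw [SimpleGraph.ConnectedComponent.mem_supp_iff] at hu
    exact (ConnectedComponent.exact (hu.trans hv.symm)).symm
  rcases hcov v.2 with hvP | hvQ
  · left; rintro x ⟨u, hu, rfl⟩
    obtain ⟨w⟩ := hmem u hu
    exact walk_stay G S P Q hcov hPQ w hvP
  · right; rintro x ⟨u, hu, rfl⟩
    obtain ⟨w⟩ := hmem u hu
    exact walk_stay G S Q P (fun x hx => (hcov hx).symm)
      (fun a ha b hb hadj => hPQ b hb a ha hadj.symm) w hvQ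

/-- If `X` is a `(3k, α)`-linked set with `α ∈ [2/3, 1)`, then
`T_X = {(A,B) : separation of order ≤ k with |X ∩ B| > α|X|}` is a tangle of order `k+1`. -/
theorem isTangle_of_linked {V : Type u} [Fintype V] (G : SimpleGraph V) (k : ℕ) (α : ℝ)
    (hα : α ∈ Set.Ico (2 / 3 : ℝ) 1) (X : Set V)
    (hX : IsLinked G (3 * k) α X) :
    IsTangle G (k + 1)
      {p : Set V × Set V | IsSeparation G p.1 p.2 ∧ sepOrder p.1 p.2 ≤ k ∧
        α * X.ncard < ((X ∩ p.2).ncard : ℝ)} := by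
  obtain ⟨hα1, hα2⟩ := hα
  have hXfin : X.Finite := Set.toFinite X
  have hX3k : 3 * k < X.ncard := by
    by_contra h
    push_neg at h
    refine hX ⟨X, h, fun C => ?_⟩
    have hempty : (Subtype.val '' C.supp) ∩ X = ∅ := by
      ext x
      simp only [Set.mem_inter_iff, Set.mem_image, Set.mem_empty_iff_false, iff_false, not_and]
      rintro ⟨u, hu, rfl⟩ hx
      exact u.2 hx
    rw [hempty]
    simp only [Set.ncard_empty, Nat.cast_zero]
    positivity
  have hN : (0:ℝ) < X.ncard := by
    have : 0 < X.ncard := by omega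
    exact_mod_cast this
  have h3k : (3:ℝ) * k < X.ncard := by exact_mod_cast hX3k
  have hαN : 2/3 * (X.ncard : ℝ) ≤ α * X.ncard := mul_le_mul_of_nonneg_right hα1 hN.le
  -- at least one side is big
  have core : ∀ A B : Set V, IsSeparation G A B → sepOrder A B ≤ k →
      α * X.ncard < ((X ∩ A).ncard : ℝ) ∨ α * X.ncard < ((X ∩ B).ncard : ℝ) := by
    intro A B hsep hord
    by_contra hcon
    push_neg at hcon
    apply hX
    refine ⟨A ∩ B, le_trans hord (by omega), fun C => ?_⟩
    have hcov : (A ∩ B)ᶜ ⊆ (A \ B) ∪ (B \ A) := by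
      intro x hx
      have hx1 : x ∈ A ∪ B := by rw [hsep.1]; trivial
      rcases hx1 with hA | hB
      · by_cases hB : x ∈ B
        · exact absurd ⟨hA, hB⟩ hx
        · exact Or.inl ⟨hA, hB⟩
      · by_cases hA : x ∈ A
        · exact absurd ⟨hA, hB⟩ hx
        · exact Or.inr ⟨hB, hA⟩
    rcases comp_side G (A ∩ B) (A \ B) (B \ A) hcov hsep.2 C with hD | hD
    · have hsub : Subtype.val '' C.supp ∩ X ⊆ X ∩ A := by
        rintro x ⟨h1, h2⟩; exact ⟨h2, (hD h1).1⟩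
      calc ((Subtype.val '' C.supp ∩ X).ncard : ℝ)
          ≤ ((X ∩ A).ncard : ℝ) := by
            exact_mod_cast Set.ncard_le_ncard hsub (Set.toFinite _)
        _ ≤ α * X.ncard := hcon.1
    · have hsub : Subtype.val '' C.supp ∩ X ⊆ X ∩ B := by
        rintro x ⟨h1, h2⟩; exact ⟨h2, (hD h1).1⟩
      calc ((Subtype.val '' C.supp ∩ X).ncard : ℝ)
          ≤ ((X ∩ B).ncard : ℝ) := by
            exact_mod_cast Set.ncard_le_ncard hsub (Set.toFinite _)
        _ ≤ α * X.ncard := hcon.2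
  -- at most one side is big
  have atmost : ∀ A B : Set V, IsSeparation G A B → sepOrder A B ≤ k →
      α * X.ncard < ((X ∩ A).ncard : ℝ) → α * X.ncard < ((X ∩ B).ncard : ℝ) → False := by
    intro A B hsep hord hA hB
    have e1 : (X ∩ A) ∩ (X ∩ B) = X ∩ (A ∩ B) := by
      ext x; simp only [Set.mem_inter_iff]; tauto
    have e2 : (X ∩ A) ∪ (X ∩ B) = X := by
      rw [← Set.inter_union_distrib_left, hsep.1, Set.inter_univ]
    have e3 := Set.ncard_inter_add_ncard_union (X ∩ A) (X ∩ B)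
    rw [e1, e2] at e3
    have hk : (X ∩ (A ∩ B)).ncard ≤ k :=
      le_trans (Set.ncard_le_ncard Set.inter_subset_right (Set.toFinite _)) hord
    have e3' : ((X ∩ (A ∩ B)).ncard : ℝ) + X.ncard = (X ∩ A).ncard + (X ∩ B).ncard := by
      exact_mod_cast e3
    have hk' : ((X ∩ (A ∩ B)).ncard : ℝ) ≤ k := by exact_mod_cast hk
    linarith
  refine ⟨?_, ?_, ?_⟩
  · rintro p ⟨hsep, hord, -⟩
    exact ⟨hsep, by omega⟩
  · intro A B hsep hord
    rw [Nat.lt_succ_iff] at hord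
    have hsep' : IsSeparation G B A :=
      ⟨by rw [Set.union_comm]; exact hsep.1, fun b hb a ha hadj => hsep.2 a ha b hb hadj.symm⟩
    have hord' : sepOrder B A ≤ k := by
      unfold sepOrder at hord ⊢; rwa [Set.inter_comm]
    simp only [Set.mem_setOf_eq]
    constructor
    · rintro ⟨-, -, hB⟩ ⟨-, -, hA⟩
      exact atmost A B hsep hord hA hB
    · intro h
      refine ⟨hsep, hord, ?_⟩
      rcases core A B hsep hord with hA | hB
      · exact absurd ⟨hsep', hord', hA⟩ h
      · exact hB
  · rintro p₁ ⟨hs₁, ho₁, hb₁⟩ p₂ ⟨hs₂, ho₂, hb₂⟩ p₃ ⟨hs₃, ho₃, hb₃⟩ ⟨hcov, -⟩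
    set S : Set V := (p₁.1 ∩ p₁.2) ∪ (p₂.1 ∩ p₂.2) ∪ (p₃.1 ∩ p₃.2) with hSdef
    have hS : S.ncard ≤ 3 * k := by
      have h1 : S.ncard ≤ (p₁.1 ∩ p₁.2).ncard + (p₂.1 ∩ p₂.2).ncard + (p₃.1 ∩ p₃.2).ncard :=
        le_trans (Set.ncard_union_le _ _) (Nat.add_le_add_right (Set.ncard_union_le _ _) _)
      have o1 : (p₁.1 ∩ p₁.2).ncard ≤ k := ho₁
      have o2 : (p₂.1 ∩ p₂.2).ncard ≤ k := ho₂
      have o3 : (p₃.1 ∩ p₃.2).ncard ≤ k := ho₃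
      omega
    have hnb : ¬ IsBalancedSeparator G α X S := fun hbal => hX ⟨S, hS, hbal⟩
    rw [IsBalancedSeparator] at hnb
    push_neg at hnb
    obtain ⟨C, hC⟩ := hnb
    have step : ∀ A B : Set V, IsSeparation G A B →
        α * X.ncard < ((X ∩ B).ncard : ℝ) → (A ∩ B) ⊆ S →
        Disjoint (Subtype.val '' C.supp) A := by
      intro A B hsep hB hsub
      have hcovAB : Sᶜ ⊆ (A \ B) ∪ (B \ A) := by
        intro x hx
        have hxS : x ∉ A ∩ B := fun hxab => hx (hsub hxab)
        have hx1 : x ∈ A ∪ B := by rw [hsep.1]; trivial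
        rcases hx1 with hA | hB'
        · by_cases h' : x ∈ B
          · exact absurd ⟨hA, h'⟩ hxS
          · exact Or.inl ⟨hA, h'⟩
        · by_cases h' : x ∈ A
          · exact absurd ⟨h', hB'⟩ hxS
          · exact Or.inr ⟨hB', h'⟩
      rcases comp_side G S (A \ B) (B \ A) hcovAB hsep.2 C with hD | hD
      · exfalso
        have hdisj : Disjoint (Subtype.val '' C.supp ∩ X) (X ∩ B) := by
          rw [Set.disjoint_left]
          rintro x ⟨hxD, -⟩ ⟨-, hxB⟩
          exact (hD hxD).2 hxB
        have hle : ((Subtype.val '' C.supp ∩ X) ∪ (X ∩ B)).ncard ≤ X.ncard :=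
          Set.ncard_le_ncard
            (Set.union_subset Set.inter_subset_right Set.inter_subset_left) hXfin
        rw [Set.ncard_union_eq hdisj] at hle
        have hle' : ((Subtype.val '' C.supp ∩ X).ncard : ℝ) + (X ∩ B).ncard ≤ X.ncard := by
          exact_mod_cast hle
        linarith
      · rw [Set.disjoint_left]
        intro x hxD hxA
        exact (hD hxD).2 hxA
    have d1 := step p₁.1 p₁.2 hs₁ hb₁ (fun x hx => Or.inl (Or.inl hx))
    have d2 := step p₂.1 p₂.2 hs₂ hb₂ (fun x hx => Or.inl (Or.inr hx))
    have d3 := step p₃.1 p₃.2 hs₃ hb₃ (fun x hx => Or.inr hx)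
    have hne : (Subtype.val '' C.supp ∩ X).Nonempty := by
      apply Set.nonempty_of_ncard_ne_zero
      intro h0
      rw [h0] at hC
      simp only [Nat.cast_zero] at hC
      linarith
    obtain ⟨x, hxD, -⟩ := hne
    have hx1 : x ∈ p₁.1 ∪ p₂.1 ∪ p₃.1 := by rw [hcov]; trivial
    rcases hx1 with (h | h) | h
    · exact Set.disjoint_left.1 d1 hxD h
    · exact Set.disjoint_left.1 d2 hxD h
    · exact Set.disjoint_left.1 d3 hxD h
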